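/- Let I, X_1, ..., X_n be discrete random variables with H(I | X_1,...,X_n) = 0, and suppose that for every subset J of size k, I is independent of (X_i : i ∈ J) (i.e., I(I; (X_i : i ∈ J)) = 0). Then ∑_{i=1}^n H(X_i) ≥ (n/(n-k)) · H(I). -/

import Mathlib

open Finset Real
open scoped Classical

/-- `P(X = a)` for a random variable `X` on the finite weighted space `(Ω, μ)`. -/
noncomputable def probOf {Ω α : Type*} [Fintype Ω] (μ : Ω → ℝ) (X : Ω → α) (a : α) : ℝ :=
  ∑ ω, if X ω = a then μ ω else 0

/-- Shannon entropy (in bits). -/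
noncomputable def entropy {Ω α : Type*} [Fintype Ω] [Fintype α] (μ : Ω → ℝ) (X : Ω → α) : ℝ :=
  -∑ a, probOf μ X a * Real.logb 2 (probOf μ X a)

/-- Mutual information `I(X;Y) = H(X) + H(Y) - H(X,Y)` (in bits). -/
noncomputable def mutualInfo {Ω α β : Type*} [Fintype Ω] [Fintype α] [Fintype β]
    (μ : Ω → ℝ) (X : Ω → α) (Y : Ω → β) : ℝ :=
  entropy μ X + entropy μ Y - entropy μ (fun ω => (X ω, Y ω))

/-- Conditional entropy `H(X | Y) = H(X,Y) - H(Y)` (in bits). -/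
noncomputable def condEntropyOf {Ω α β : Type*} [Fintype Ω] [Fintype α] [Fintype β]
    (μ : Ω → ℝ) (X : Ω → α) (Y : Ω → β) : ℝ :=
  entropy μ (fun ω => (X ω, Y ω)) - entropy μ Y

section Lemmas

variable {Ω α β γ : Type*} [Fintype Ω] (μ : Ω → ℝ)

lemma probOf_nonneg (hμ0 : ∀ ω, 0 ≤ μ ω) (X : Ω → α) (a : α) : 0 ≤ probOf μ X a := by
  apply Finset.sum_nonneg
  intro ω _
  split <;> simp [hμ0 ω]

lemma sum_probOf [Fintype α] (hμ1 : ∑ ω, μ ω = 1) (X : Ω → α) :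
    ∑ a, probOf μ X a = 1 := by
  rw [← hμ1]
  unfold probOf
  rw [Finset.sum_comm]
  congr 1
  ext ω
  simp [Finset.sum_ite_eq' Finset.univ (X ω)]

lemma probOf_fst [Fintype β] (X : Ω → α) (Y : Ω → β) (a : α) :
    probOf μ X a = ∑ b, probOf μ (fun ω => (X ω, Y ω)) (a, b) := by
  unfold probOf
  rw [Finset.sum_comm]
  congr 1
  ext ω
  by_cases h : X ω = a
  · subst h
    simp [Prod.ext_iff, Finset.sum_ite_eq' Finset.univ (Y ω)]
  · simp [Prod.ext_iff, h]

lemma probOf_snd [Fintype α] (X : Ω → α) (Y : Ω → β) (b : β) :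
    probOf μ Y b = ∑ a, probOf μ (fun ω => (X ω, Y ω)) (a, b) := by
  unfold probOf
  rw [Finset.sum_comm]
  congr 1
  ext ω
  by_cases h : Y ω = b
  · subst h
    simp [Prod.ext_iff, Finset.sum_ite_eq' Finset.univ (X ω)]
  · simp [Prod.ext_iff, h]

lemma probOf_pair_le_fst (hμ0 : ∀ ω, 0 ≤ μ ω) [Fintype β] (X : Ω → α) (Y : Ω → β)
    (a : α) (b : β) : probOf μ (fun ω => (X ω, Y ω)) (a, b) ≤ probOf μ X a := by
  rw [probOf_fst μ X Y a]
  exact Finset.single_le_sum (f := fun b => probOf μ (fun ω => (X ω, Y ω)) (a, b))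
    (fun c _ => probOf_nonneg μ hμ0 _ _) (Finset.mem_univ b)

lemma probOf_pair_le_snd (hμ0 : ∀ ω, 0 ≤ μ ω) [Fintype α] (X : Ω → α) (Y : Ω → β)
    (a : α) (b : β) : probOf μ (fun ω => (X ω, Y ω)) (a, b) ≤ probOf μ Y b := by
  rw [probOf_snd μ X Y b]
  exact Finset.single_le_sum (f := fun a => probOf μ (fun ω => (X ω, Y ω)) (a, b))
    (fun c _ => probOf_nonneg μ hμ0 _ _) (Finset.mem_univ a)

/-- Entropy is invariant under post-composition with an injective map. -/
lemma entropy_comp_injective [Fintype α] [Fintype β] (X : Ω → α) (f : α → β)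
    (hf : Function.Injective f) :
    entropy μ (fun ω => f (X ω)) = entropy μ X := by
  have hzero : ∀ b : β, b ∉ Finset.univ.image f → probOf μ (fun ω => f (X ω)) b = 0 := by
    intro b hb
    unfold probOf
    apply Finset.sum_eq_zero
    intro ω _
    have : f (X ω) ≠ b := by
      intro h
      exact hb (Finset.mem_image.mpr ⟨X ω, Finset.mem_univ _, h⟩)
    simp [this]
  unfold entropy
  congr 1
  rw [← Finset.sum_subset (Finset.subset_univ (Finset.univ.image f))]
  · rw [Finset.sum_image (fun a _ a' _ h => hf h)]
    congr 1
    ext a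
    have : probOf μ (fun ω => f (X ω)) (f a) = probOf μ X a := by
      unfold probOf
      congr 1
      ext ω
      simp [hf.eq_iff]
    rw [this]
  · intro b _ hb
    rw [hzero b hb]
    simp

/-- Entropy of a variable into a `Unique` type is `0`. -/
lemma entropy_unique [Fintype α] [Unique α] (hμ1 : ∑ ω, μ ω = 1) (X : Ω → α) :
    entropy μ X = 0 := by
  have h := sum_probOf μ hμ1 X
  rw [Fintype.sum_unique] at h
  unfold entropy
  rw [Fintype.sum_unique, h]
  simp

/-- `H(X) ≤ H(X,Y)`. -/
lemma entropy_le_entropy_pair (hμ0 : ∀ ω, 0 ≤ μ ω) [Fintype α] [Fintype β]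
    (X : Ω → α) (Y : Ω → β) :
    entropy μ X ≤ entropy μ (fun ω => (X ω, Y ω)) := by
  unfold entropy
  rw [neg_le_neg_iff]
  have hX : ∑ a, probOf μ X a * Real.logb 2 (probOf μ X a)
      = ∑ a, ∑ b, probOf μ (fun ω => (X ω, Y ω)) (a, b) * Real.logb 2 (probOf μ X a) := by
    congr 1; ext a
    rw [probOf_fst μ X Y a, Finset.sum_mul]
  rw [hX, Fintype.sum_prod_type (f := fun p : α × β =>
    probOf μ (fun ω => (X ω, Y ω)) p * Real.logb 2 (probOf μ (fun ω => (X ω, Y ω)) p))]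
  apply Finset.sum_le_sum
  intro a _
  apply Finset.sum_le_sum
  intro b _
  set q := probOf μ (fun ω => (X ω, Y ω)) (a, b) with hq
  have hq0 : 0 ≤ q := probOf_nonneg μ hμ0 _ _
  rcases eq_or_lt_of_le hq0 with h | h
  · simp [← h]
  · have hle : q ≤ probOf μ X a := probOf_pair_le_fst μ hμ0 X Y a b
    exact mul_le_mul_of_nonneg_left
      (Real.logb_le_logb_of_le (by norm_num) h hle) hq0

/-- `H(X,Y) ≤ H(X) + H(Y)` (subadditivity). -/
lemma entropy_pair_le_add (hμ0 : ∀ ω, 0 ≤ μ ω) (hμ1 : ∑ ω, μ ω = 1)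
    [Fintype α] [Fintype β] (X : Ω → α) (Y : Ω → β) :
    entropy μ (fun ω => (X ω, Y ω)) ≤ entropy μ X + entropy μ Y := by
  set q := probOf μ (fun ω => (X ω, Y ω)) with hqdef
  have key : ∀ a : α, ∀ b : β,
      q (a, b) * Real.logb 2 (probOf μ X a) + q (a, b) * Real.logb 2 (probOf μ Y b)
        - q (a, b) * Real.logb 2 (q (a, b))
      ≤ (probOf μ X a * probOf μ Y b - q (a, b)) / Real.log 2 := by
    intro a b
    set pa := probOf μ X a
    set pb := probOf μ Y b
    have hq0 : 0 ≤ q (a, b) := probOf_nonneg μ hμ0 _ _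
    have hpa0 : 0 ≤ pa := probOf_nonneg μ hμ0 _ _
    have hpb0 : 0 ≤ pb := probOf_nonneg μ hμ0 _ _
    rcases eq_or_lt_of_le hq0 with h | h
    · rw [← h]
      simp
      positivity
    · have hpa : q (a, b) ≤ pa := probOf_pair_le_fst μ hμ0 X Y a b
      have hpb : q (a, b) ≤ pb := probOf_pair_le_snd μ hμ0 X Y a b
      have hpa' : 0 < pa := lt_of_lt_of_le h hpa
      have hpb' : 0 < pb := lt_of_lt_of_le h hpb
      have hcomb : q (a, b) * Real.logb 2 pa + q (a, b) * Real.logb 2 pb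
            - q (a, b) * Real.logb 2 (q (a, b))
          = q (a, b) * Real.logb 2 (pa * pb / q (a, b)) := by
        rw [Real.logb_div (by positivity) (ne_of_gt h),
          Real.logb_mul (ne_of_gt hpa') (ne_of_gt hpb')]
        ring
      rw [hcomb]
      have hlog : Real.logb 2 (pa * pb / q (a, b)) ≤ (pa * pb / q (a, b) - 1) / Real.log 2 := by
        rw [Real.logb, div_le_div_iff_of_pos_right (Real.log_pos (by norm_num))]
        exact Real.log_le_sub_one_of_pos (by positivity)
      calc q (a, b) * Real.logb 2 (pa * pb / q (a, b))
          ≤ q (a, b) * ((pa * pb / q (a, b) - 1) / Real.log 2) :=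
            mul_le_mul_of_nonneg_left hlog hq0
        _ = (pa * pb - q (a, b)) / Real.log 2 := by
            field_simp
  have hmain : ∑ a : α, ∑ b : β,
      (q (a, b) * Real.logb 2 (probOf μ X a) + q (a, b) * Real.logb 2 (probOf μ Y b)
        - q (a, b) * Real.logb 2 (q (a, b))) ≤ 0 := by
    calc ∑ a : α, ∑ b : β,
        (q (a, b) * Real.logb 2 (probOf μ X a) + q (a, b) * Real.logb 2 (probOf μ Y b)
          - q (a, b) * Real.logb 2 (q (a, b)))
        ≤ ∑ a : α, ∑ b : β, (probOf μ X a * probOf μ Y b - q (a, b)) / Real.log 2 :=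
          Finset.sum_le_sum fun a _ => Finset.sum_le_sum fun b _ => key a b
      _ = ((∑ a, probOf μ X a) * (∑ b, probOf μ Y b) - ∑ a : α, ∑ b : β, q (a, b)) / Real.log 2 := by
          simp only [← Finset.sum_div, ← Finset.sum_sub_distrib, Finset.sum_mul_sum]
      _ = 0 := by
          have h1 : ∑ a : α, ∑ b : β, q (a, b) = 1 := by
            rw [← Fintype.sum_prod_type (f := q), hqdef,
              sum_probOf μ hμ1 (fun ω => (X ω, Y ω))]
          rw [sum_probOf μ hμ1 X, sum_probOf μ hμ1 Y, h1]
          simp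
  have hA : ∑ a, probOf μ X a * Real.logb 2 (probOf μ X a)
      = ∑ a : α, ∑ b : β, q (a, b) * Real.logb 2 (probOf μ X a) := by
    congr 1; ext a
    rw [hqdef, probOf_fst μ X Y a, Finset.sum_mul]
  have hB : ∑ b, probOf μ Y b * Real.logb 2 (probOf μ Y b)
      = ∑ a : α, ∑ b : β, q (a, b) * Real.logb 2 (probOf μ Y b) := by
    rw [Finset.sum_comm]
    congr 1; ext b
    rw [hqdef, probOf_snd μ X Y b, Finset.sum_mul]
  have hQ : ∑ p : α × β, q p * Real.logb 2 (q p)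
      = ∑ a : α, ∑ b : β, q (a, b) * Real.logb 2 (q (a, b)) :=
    Fintype.sum_prod_type (f := fun p : α × β => q p * Real.logb 2 (q p))
  unfold entropy
  rw [← hqdef]
  simp only [Finset.sum_add_distrib, Finset.sum_sub_distrib] at hmain
  rw [hA, hB, hQ]
  linarith [hmain]

set_option maxHeartbeats 1000000 in
/-- `H(tuple over T) ≤ ∑ marginal entropies`. -/
lemma entropy_tuple_le_sum (hμ0 : ∀ ω, 0 ≤ μ ω) (hμ1 : ∑ ω, μ ω = 1)
    [Fintype α] {ι : Type*} [Fintype ι] [DecidableEq ι] (Y : ι → Ω → α) (T : Finset ι) :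
    entropy μ (fun ω (i : {x // x ∈ T}) => Y i.1 ω) ≤ ∑ i ∈ T, entropy μ (Y i) := by
  induction T using Finset.induction_on with
  | empty =>
      rw [Finset.sum_empty]
      have : entropy μ (fun ω (i : {x // x ∈ (∅ : Finset ι)}) => Y i.1 ω) = 0 :=
        entropy_unique μ hμ1 _
      rw [this]
  | @insert a T ha ih =>
      have hf : Function.Injective
          (fun v : ({x // x ∈ insert a T} → α) =>
            (v ⟨a, Finset.mem_insert_self a T⟩, fun t : {x // x ∈ T} => v ⟨t.1, Finset.mem_insert_of_mem t.2⟩)) := by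
        intro v v' h
        rw [Prod.ext_iff] at h
        funext i
        rcases Finset.mem_insert.mp i.2 with h1 | h1
        · have : i = ⟨a, Finset.mem_insert_self a T⟩ := Subtype.ext h1
          rw [this]; exact h.1
        · have := congrFun h.2 ⟨i.1, h1⟩
          simpa using this
      have heq : entropy μ (fun ω => ((fun i : {x // x ∈ insert a T} => Y i.1 ω) ⟨a, Finset.mem_insert_self a T⟩,
            fun t : {x // x ∈ T} => (fun i : {x // x ∈ insert a T} => Y i.1 ω) ⟨t.1, Finset.mem_insert_of_mem t.2⟩))
          = entropy μ (fun ω (i : {x // x ∈ insert a T}) => Y i.1 ω) :=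
        entropy_comp_injective μ (fun ω (i : {x // x ∈ insert a T}) => Y i.1 ω) _ hf
      have heq' : entropy μ (fun ω (i : {x // x ∈ insert a T}) => Y i.1 ω)
          = entropy μ (fun ω => (Y a ω, fun t : {x // x ∈ T} => Y t.1 ω)) := by
        rw [← heq]
      rw [heq', Finset.sum_insert ha]
      calc entropy μ (fun ω => (Y a ω, fun t : {x // x ∈ T} => Y t.1 ω))
          ≤ entropy μ (Y a) + entropy μ (fun ω (t : {x // x ∈ T}) => Y t.1 ω) :=
            entropy_pair_le_add μ hμ0 hμ1 _ _
        _ ≤ entropy μ (Y a) + ∑ i ∈ T, entropy μ (Y i) := by linarith [ih]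

end Lemmas

set_option maxHeartbeats 2000000 in
/-- Key lemma: if the secret is determined by all shares and independent of the shares in `J`,
then `H(I) ≤ ∑_{i ∉ J} H(X_i)`. -/
lemma key_bound {Ω S α : Type*} [Fintype Ω] [Fintype S] [Fintype α]
    (μ : Ω → ℝ) (hμ0 : ∀ ω, 0 ≤ μ ω) (hμ1 : ∑ ω, μ ω = 1)
    {n : ℕ} (I : Ω → S) (X : Fin n → Ω → α)
    (hdet : condEntropyOf μ I (fun ω (i : Fin n) => X i ω) = 0)
    (J : Finset (Fin n))
    (hJ : mutualInfo μ I (fun ω (i : {x // x ∈ J}) => X i.1 ω) = 0) :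
    entropy μ I ≤ ∑ i ∈ Jᶜ, entropy μ (X i) := by
  classical
  have h1 : entropy μ I + entropy μ (fun ω (i : {x // x ∈ J}) => X i.1 ω)
      = entropy μ (fun ω => (I ω, fun i : {x // x ∈ J} => X i.1 ω)) := by
    have := hJ
    unfold mutualInfo at this
    linarith
  have h2 : entropy μ (fun ω => (I ω, fun i : {x // x ∈ J} => X i.1 ω))
      ≤ entropy μ (fun ω => ((I ω, fun i : {x // x ∈ J} => X i.1 ω),
          fun i : {x // x ∈ Jᶜ} => X i.1 ω)) :=
    entropy_le_entropy_pair μ hμ0 _ _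
  have hf : Function.Injective (fun p : S × (Fin n → α) =>
      ((p.1, fun i : {x // x ∈ J} => p.2 i.1), fun i : {x // x ∈ Jᶜ} => p.2 i.1)) := by
    rintro ⟨s, v⟩ ⟨s', v'⟩ h
    simp only [Prod.ext_iff] at h
    obtain ⟨⟨hs, hJv⟩, hBv⟩ := h
    refine Prod.ext hs ?_
    funext i
    by_cases hi : i ∈ J
    · exact congrFun hJv ⟨i, hi⟩
    · exact congrFun hBv ⟨i, Finset.mem_compl.mpr hi⟩
  have h3 : entropy μ (fun ω => ((I ω, fun i : {x // x ∈ J} => X i.1 ω),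
        fun i : {x // x ∈ Jᶜ} => X i.1 ω))
      = entropy μ (fun ω => (I ω, fun i : Fin n => X i ω)) :=
    entropy_comp_injective μ (fun ω => (I ω, fun i : Fin n => X i ω)) _ hf
  have h4 : entropy μ (fun ω => (I ω, fun i : Fin n => X i ω))
      = entropy μ (fun ω (i : Fin n) => X i ω) := by
    unfold condEntropyOf at hdet
    linarith
  have hg : Function.Injective (fun v : Fin n → α =>
      ((fun i : {x // x ∈ J} => v i.1), fun i : {x // x ∈ Jᶜ} => v i.1)) := by
    intro v v' h
    simp only [Prod.ext_iff] at h
    funext i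
    by_cases hi : i ∈ J
    · exact congrFun h.1 ⟨i, hi⟩
    · exact congrFun h.2 ⟨i, Finset.mem_compl.mpr hi⟩
  have h5 : entropy μ (fun ω => ((fun i : {x // x ∈ J} => X i.1 ω),
        fun i : {x // x ∈ Jᶜ} => X i.1 ω))
      = entropy μ (fun ω (i : Fin n) => X i ω) :=
    entropy_comp_injective μ (fun ω (i : Fin n) => X i ω) _ hg
  have h6 : entropy μ (fun ω => ((fun i : {x // x ∈ J} => X i.1 ω),
        fun i : {x // x ∈ Jᶜ} => X i.1 ω))
      ≤ entropy μ (fun ω (i : {x // x ∈ J}) => X i.1 ω)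
        + entropy μ (fun ω (i : {x // x ∈ Jᶜ}) => X i.1 ω) :=
    entropy_pair_le_add μ hμ0 hμ1 _ _
  have h7 : entropy μ (fun ω (i : {x // x ∈ Jᶜ}) => X i.1 ω) ≤ ∑ i ∈ Jᶜ, entropy μ (X i) :=
    entropy_tuple_le_sum μ hμ0 hμ1 X Jᶜ
  linarith

/-- Ramp-scheme entropy bound: if all `n` shares determine the secret `I` and any
`k` shares reveal nothing about it, then `∑ H(X_i) ≥ (n/(n-k)) H(I)`. -/
theorem ramp_scheme_entropy_bound {Ω S α : Type*} [Fintype Ω] [Fintype S] [Fintype α]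
    (μ : Ω → ℝ) (hμ0 : ∀ ω, 0 ≤ μ ω) (hμ1 : ∑ ω, μ ω = 1)
    (n k : ℕ) (hk : k < n)
    (I : Ω → S) (X : Fin n → Ω → α)
    (hdet : condEntropyOf μ I (fun ω (i : Fin n) => X i ω) = 0)
    (hsec : ∀ J ∈ (Finset.univ : Finset (Fin n)).powersetCard k,
      mutualInfo μ I (fun ω (i : {x // x ∈ J}) => X i.1 ω) = 0) :
    ∑ i : Fin n, entropy μ (X i) ≥ ((n : ℝ) / ((n : ℝ) - k)) * entropy μ I := by
  classical
  haveI : NeZero n := ⟨by omega⟩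
  set T : Finset (Fin n) := Finset.univ.filter (fun t : Fin n => t.val < n - k) with hTdef
  have hT : T = (Finset.univ : Finset (Fin (n - k))).image (Fin.castLE (Nat.sub_le n k)) := by
    ext t
    simp only [hTdef, Finset.mem_filter, Finset.mem_univ, true_and, Finset.mem_image]
    constructor
    · intro ht
      exact ⟨⟨t.1, ht⟩, rfl⟩
    · rintro ⟨a, rfl⟩
      exact a.isLt
  have hTcard : T.card = n - k := by
    rw [hT, Finset.card_image_of_injective _ (Fin.castLE_injective _), Finset.card_univ,
      Fintype.card_fin]
  set B : Fin n → Finset (Fin n) := fun s => T.image (fun t => s + t) with hBdef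
  have hBcard : ∀ s, (B s).card = n - k := by
    intro s
    rw [hBdef]
    rw [Finset.card_image_of_injective _ (add_right_injective s), hTcard]
  have hJmem : ∀ s, (B s)ᶜ ∈ (Finset.univ : Finset (Fin n)).powersetCard k := by
    intro s
    rw [Finset.mem_powersetCard_univ, Finset.card_compl, hBcard s, Fintype.card_fin]
    omega
  have hkey : ∀ s : Fin n, entropy μ I ≤ ∑ i ∈ B s, entropy μ (X i) := by
    intro s
    have := key_bound μ hμ0 hμ1 I X hdet ((B s)ᶜ) (hsec _ (hJmem s))
    rwa [compl_compl] at this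
  have hcount : ∀ i : Fin n, (Finset.univ.filter (fun s => i ∈ B s)).card = n - k := by
    intro i
    have himg : Finset.univ.filter (fun s => i ∈ B s) = T.image (fun t => i - t) := by
      ext s
      simp only [Finset.mem_filter, Finset.mem_univ, true_and, hBdef, Finset.mem_image]
      constructor
      · rintro ⟨t, ht, hst⟩
        exact ⟨t, ht, by rw [← hst]; abel⟩
      · rintro ⟨t, ht, rfl⟩
        exact ⟨t, ht, by abel⟩
    rw [himg, Finset.card_image_of_injective _ sub_right_injective, hTcard]
  have hsum : (n : ℝ) * entropy μ I ≤ ((n : ℝ) - k) * ∑ i : Fin n, entropy μ (X i) := by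
    have h1 : (n : ℝ) * entropy μ I ≤ ∑ s : Fin n, ∑ i ∈ B s, entropy μ (X i) := by
      calc (n : ℝ) * entropy μ I = ∑ _s : Fin n, entropy μ I := by
            rw [Finset.sum_const, Finset.card_univ, Fintype.card_fin, nsmul_eq_mul]
        _ ≤ ∑ s : Fin n, ∑ i ∈ B s, entropy μ (X i) := Finset.sum_le_sum fun s _ => hkey s
    have h2 : ∑ s : Fin n, ∑ i ∈ B s, entropy μ (X i)
        = ((n : ℝ) - k) * ∑ i : Fin n, entropy μ (X i) := by
      have hswap : ∑ s : Fin n, ∑ i ∈ B s, entropy μ (X i)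
          = ∑ i : Fin n, ∑ s : Fin n, (if i ∈ B s then entropy μ (X i) else 0) := by
        rw [Finset.sum_comm]
        congr 1
        ext s
        rw [Finset.sum_ite_mem, Finset.univ_inter]
      rw [hswap]
      have hinner : ∀ i : Fin n, ∑ s : Fin n, (if i ∈ B s then entropy μ (X i) else 0)
          = ((n : ℝ) - k) * entropy μ (X i) := by
        intro i
        rw [← Finset.sum_filter, Finset.sum_const, hcount i, nsmul_eq_mul]
        congr 1
        have : (k : ℝ) ≤ (n : ℝ) := by exact_mod_cast hk.le
        push_cast [Nat.cast_sub hk.le]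
        ring
      rw [Finset.sum_congr rfl (fun i _ => hinner i), ← Finset.mul_sum]
    linarith [h1, h2.symm.le, h2.le]
  have hpos : (0 : ℝ) < (n : ℝ) - k := by
    have : (k : ℝ) < (n : ℝ) := by exact_mod_cast hk
    linarith
  rw [ge_iff_le, div_mul_eq_mul_div, div_le_iff₀ hpos]
  nlinarith [hsum]
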